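/- arXiv:math-ph/0010002 — 5 statements merged into one kernel-verified Lean document; each statement's English description precedes it below -/
import Mathlib

section
/- Let $A$ and $B$ be bounded operators on a Hilbert space. Then $e^{-B} A e^{B} - A - [A,B] = \int_0^1 \int_0^s e^{-s_1 B} [[A,B],B] e^{s_1 B} \, ds_1 \, ds$, and consequently $\|e^{-B} A e^{B} - A - [A,B]\| \leq \frac{1}{2} \|[[A,B],B]\| e^{2\|B\|}$. -/
open NormedSpace intervalIntegral

set_option synthInstance.maxHeartbeats 1000000
set_option maxHeartbeats 1000000

section aux

variable {H : Type*} [NormedAddCommGroup H] [InnerProductSpace ℂ H] [CompleteSpace H]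

lemma aux_norm_exp_le (X : H →L[ℂ] H) : ‖exp X‖ ≤ Real.exp ‖X‖ := by
  rw [exp_eq_tsum ℝ, Real.exp_eq_exp_ℝ, exp_eq_tsum ℝ]
  refine (norm_tsum_le_tsum_norm (norm_expSeries_summable' (𝕂 := ℝ) X)).trans ?_
  refine Summable.tsum_le_tsum (fun n => ?_) (norm_expSeries_summable' (𝕂 := ℝ) X)
    (expSeries_summable' (𝕂 := ℝ) (‖X‖ : ℝ))
  rw [norm_smul, smul_eq_mul, Real.norm_eq_abs, abs_of_nonneg (by positivity)]
  gcongr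
  rcases Nat.eq_zero_or_pos n with hn | hn
  · subst hn
    simpa [ContinuousLinearMap.one_def] using ContinuousLinearMap.norm_id_le (𝕜 := ℂ) (E := H)
  · exact norm_pow_le' X hn

lemma aux_deriv (B X : H →L[ℂ] H) (s : ℝ) :
    HasDerivAt (fun s : ℝ => exp (-(s • B)) * X * exp (s • B))
      (exp (-(s • B)) * (X * B - B * X) * exp (s • B)) s := by
  have h1 : HasDerivAt (fun s : ℝ => exp (s • (-B)) * X)
      (exp (s • (-B)) * (-B) * X) s :=
    (hasDerivAt_exp_smul_const (𝕂 := ℝ) (-B) s).mul_const X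
  have h2 : HasDerivAt (fun s : ℝ => exp (s • B)) (exp (s • B) * B) s :=
    hasDerivAt_exp_smul_const (𝕂 := ℝ) B s
  have h := h1.mul h2
  have hc : exp (s • B) * B = B * exp (s • B) :=
    ((((Commute.refl B).smul_right s).exp_right).symm).eq
  simp only [smul_neg] at h
  refine h.congr_deriv ?_
  rw [hc]
  noncomm_ring

lemma aux_cont (B X : H →L[ℂ] H) :
    Continuous (fun s : ℝ => exp (-(s • B)) * X * exp (s • B)) := by
  have h1 : Continuous (fun s : ℝ => exp (-(s • B))) :=
    by simpa only [smul_neg] using continuous_iff_continuousAt.2 fun s =>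
      (hasDerivAt_exp_smul_const (𝕂 := ℝ) (-B) s).continuousAt
  have h2 : Continuous (fun s : ℝ => exp (s • B)) :=
    continuous_iff_continuousAt.2 fun s => (hasDerivAt_exp_smul_const (𝕂 := ℝ) B s).continuousAt
  exact (h1.mul continuous_const).mul h2

end aux

/-- Taylor formula with integral remainder for conjugation:
`e^{-B} A e^{B} - A - [A,B] = ∫₀¹∫₀ˢ e^{-s₁B} [[A,B],B] e^{s₁B} ds₁ ds`, and the
resulting bound `‖e^{-B} A e^{B} - A - [A,B]‖ ≤ (1/2) ‖[[A,B],B]‖ e^{2‖B‖}`. -/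
theorem stmt_4 {H : Type*} [NormedAddCommGroup H] [InnerProductSpace ℂ H] [CompleteSpace H]
    (A B : H →L[ℂ] H) :
    exp (-B) * A * exp B - A - (A * B - B * A) =
      ∫ s in (0:ℝ)..1, ∫ s₁ in (0:ℝ)..s,
        exp (-(s₁ • B)) * ((A * B - B * A) * B - B * (A * B - B * A)) * exp (s₁ • B) ∧
    ‖exp (-B) * A * exp B - A - (A * B - B * A)‖ ≤
      (1 / 2) * ‖(A * B - B * A) * B - B * (A * B - B * A)‖ * Real.exp (2 * ‖B‖) := by
  set C := A * B - B * A with hC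
  set D := C * B - B * C with hD
  set g : ℝ → (H →L[ℂ] H) := fun s => exp (-(s • B)) * C * exp (s • B) with hg
  set h : ℝ → (H →L[ℂ] H) := fun s => exp (-(s • B)) * D * exp (s • B) with hh
  have hg_cont : Continuous g := aux_cont B C
  have hh_cont : Continuous h := aux_cont B D
  have hf' : ∀ s : ℝ, HasDerivAt (fun s : ℝ => exp (-(s • B)) * A * exp (s • B)) (g s) s :=
    fun s => aux_deriv B A s
  have hg' : ∀ s : ℝ, HasDerivAt g (h s) s := fun s => aux_deriv B C s
  have hg0 : g 0 = C := by simp [hg, exp_zero]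
  -- first step : f 1 - f 0 = ∫ g
  have key1 : exp (-B) * A * exp B - A = ∫ s in (0:ℝ)..1, g s := by
    have := integral_eq_sub_of_hasDerivAt (f := fun s : ℝ => exp (-(s • B)) * A * exp (s • B))
      (f' := g) (a := 0) (b := 1) (fun s _ => hf' s)
      (hg_cont.intervalIntegrable 0 1)
    rw [this]
    simp [exp_zero]
  have key2 : ∀ s : ℝ, g s - C = ∫ s₁ in (0:ℝ)..s, h s₁ := by
    intro s
    rw [← hg0,
      integral_eq_sub_of_hasDerivAt (fun t _ => hg' t) (hh_cont.intervalIntegrable 0 s)]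
  have main : exp (-B) * A * exp B - A - C =
      ∫ s in (0:ℝ)..1, ∫ s₁ in (0:ℝ)..s, h s₁ := by
    have hCi : (∫ _ in (0:ℝ)..1, C) = C := by simp
    calc exp (-B) * A * exp B - A - C
        = (∫ s in (0:ℝ)..1, g s) - ∫ _ in (0:ℝ)..1, C := by rw [← key1, hCi]
      _ = ∫ s in (0:ℝ)..1, (g s - C) :=
          (integral_sub (hg_cont.intervalIntegrable 0 1)
            (intervalIntegrable_const)).symm
      _ = ∫ s in (0:ℝ)..1, ∫ s₁ in (0:ℝ)..s, h s₁ :=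
          integral_congr (fun s _ => key2 s)
  refine ⟨main, ?_⟩
  -- the bound
  set M := ‖D‖ * Real.exp (2 * ‖B‖) with hM
  have hM0 : 0 ≤ M := by positivity
  have hbound : ∀ s₁ : ℝ, s₁ ∈ Set.Icc (0:ℝ) 1 → ‖h s₁‖ ≤ M := by
    intro s₁ hs₁
    have h1 : ‖exp (-(s₁ • B))‖ ≤ Real.exp ‖B‖ := by
      refine (aux_norm_exp_le _).trans (Real.exp_le_exp.mpr ?_)
      rw [norm_neg, norm_smul, Real.norm_eq_abs, abs_of_nonneg hs₁.1]
      nlinarith [hs₁.2, norm_nonneg B]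
    have h2 : ‖exp (s₁ • B)‖ ≤ Real.exp ‖B‖ := by
      refine (aux_norm_exp_le _).trans (Real.exp_le_exp.mpr ?_)
      rw [norm_smul, Real.norm_eq_abs, abs_of_nonneg hs₁.1]
      nlinarith [hs₁.2, norm_nonneg B]
    calc ‖h s₁‖ ≤ ‖exp (-(s₁ • B)) * D‖ * ‖exp (s₁ • B)‖ := norm_mul_le _ _
      _ ≤ ‖exp (-(s₁ • B))‖ * ‖D‖ * ‖exp (s₁ • B)‖ := by
          gcongr
          exact norm_mul_le _ _
      _ ≤ Real.exp ‖B‖ * ‖D‖ * Real.exp ‖B‖ := by gcongr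
      _ = M := by rw [hM, two_mul, Real.exp_add]; ring
  have hFs : ∀ s ∈ Set.uIoc (0:ℝ) 1, ‖∫ s₁ in (0:ℝ)..s, h s₁‖ ≤ M * s := by
    intro s hs
    rw [Set.uIoc_of_le zero_le_one] at hs
    have hb := intervalIntegral.norm_integral_le_of_norm_le_const
      (C := M) (f := h) (a := 0) (b := s) ?_
    · rw [sub_zero, abs_of_nonneg hs.1.le] at hb
      exact hb
    · intro x hx
      rw [Set.uIoc_of_le hs.1.le] at hx
      exact hbound x ⟨hx.1.le, hx.2.trans hs.2⟩
  rw [main]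
  have hint : IntervalIntegrable (fun s : ℝ => M * s) MeasureTheory.volume 0 1 :=
    (continuous_const.mul continuous_id).intervalIntegrable 0 1
  have hfin := intervalIntegral.norm_integral_le_of_norm_le
    (f := fun s => ∫ s₁ in (0:ℝ)..s, h s₁) (a := 0) (b := 1)
    (g := fun s => M * s) zero_le_one ?_ hint
  · refine hfin.trans ?_
    rw [intervalIntegral.integral_const_mul, integral_id]
    rw [hM]
    apply le_of_eq
    ring
  · exact MeasureTheory.ae_of_all _
      (fun t ht => hFs t (by rwa [Set.uIoc_of_le zero_le_one]))
end

section
/- Let $d > 1$ and $C > 0$. There exists a constant $C' > 0$ such that for every $L \geq 1$, the number of pairs of positive integers $(i,j)$ with $i \neq j$ and $|i^d - j^d| \leq L$ is at most $C' L^{2/(d-1)}$. -/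
lemma key_bd (d : ℝ) (hd : 1 < d) (L : ℝ) (hL : 1 ≤ L) (y : ℝ) (hy : 1 ≤ y)
    (h : (y + 1) ^ d - y ^ d ≤ L) : y + 1 ≤ 2 * L ^ (d - 1)⁻¹ := by
  have hy0 : 0 < y := by linarith
  have hber : 1 + d * (1 / y) ≤ (1 + 1 / y) ^ d :=
    one_add_mul_self_le_rpow_one_add (le_trans (by norm_num) (one_div_nonneg.mpr hy0.le)) hd.le
  have hmul : (y + 1) ^ d = y ^ d * (1 + 1 / y) ^ d := by
    rw [← Real.mul_rpow hy0.le (by positivity)]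
    field_simp
  have hpow : y ^ d = y ^ (d - 1) * y := by
    rw [← Real.rpow_add_one hy0.ne' (d - 1)]; ring_nf
  have hyd : 0 < y ^ (d - 1) := Real.rpow_pos_of_pos hy0 _
  have h2 : y ^ d + d * y ^ (d - 1) ≤ (y + 1) ^ d := by
    rw [hmul]
    have := mul_le_mul_of_nonneg_left hber (Real.rpow_nonneg hy0.le d)
    calc y ^ d + d * y ^ (d - 1) = y ^ d * (1 + d * (1 / y)) := by
          rw [hpow]; field_simp
      _ ≤ _ := this
  have h3 : y ^ (d - 1) ≤ L := by nlinarith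
  have h4 : y ≤ L ^ (d - 1)⁻¹ := by
    have := Real.rpow_le_rpow hyd.le h3 (inv_nonneg.mpr (by linarith) : (0:ℝ) ≤ (d-1)⁻¹)
    rwa [Real.rpow_rpow_inv hy0.le (by linarith : d - 1 ≠ 0)] at this
  have h5 : 1 ≤ L ^ (d - 1)⁻¹ := Real.one_le_rpow hL (inv_nonneg.mpr (by linarith))
  linarith

/-- Counting bound: for `d > 1` there is `C' > 0` such that for every `L ≥ 1` the set of
pairs of distinct positive integers `(i,j)` with `|i^d - j^d| ≤ L` is finite with
cardinality at most `C' L^{2/(d-1)}`. -/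
theorem stmt_7 (d : ℝ) (hd : 1 < d) :
    ∃ C' : ℝ, 0 < C' ∧ ∀ L : ℝ, 1 ≤ L →
      (let S := {p : ℕ × ℕ | 1 ≤ p.1 ∧ 1 ≤ p.2 ∧ p.1 ≠ p.2 ∧
        |(p.1 : ℝ) ^ d - (p.2 : ℝ) ^ d| ≤ L};
      S.Finite ∧ (S.ncard : ℝ) ≤ C' * L ^ (2 / (d - 1))) := by
  refine ⟨4, by norm_num, fun L hL => ?_⟩
  intro S
  set B : ℝ := 2 * L ^ (d - 1)⁻¹ with hB
  have hB1 : 1 ≤ L ^ (d - 1)⁻¹ := Real.one_le_rpow hL (inv_nonneg.mpr (by linarith))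
  have hB0 : 0 ≤ B := by linarith
  set N : ℕ := ⌊B⌋₊ with hN
  -- main bound: any element of S has both coords ≤ B
  have hbd : ∀ i j : ℕ, 1 ≤ i → i < j → ((j:ℝ)) ^ d - ((i:ℝ)) ^ d ≤ L → (j : ℝ) ≤ B := by
    intro i j hi hij h
    have hy : (1:ℝ) ≤ (j:ℝ) - 1 := by
      have : 2 ≤ j := by omega
      have : (2:ℝ) ≤ (j:ℝ) := by exact_mod_cast this
      linarith
    have hij' : (i:ℝ) ≤ (j:ℝ) - 1 := by
      have : i ≤ j - 1 := by omega
      have h1 : (i:ℝ) ≤ ((j-1 : ℕ) : ℝ) := by exact_mod_cast this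
      have h2 : ((j-1 : ℕ) : ℝ) = (j:ℝ) - 1 := by
        have : 1 ≤ j := by omega
        push_cast [this]; ring
      linarith [h2 ▸ h1]
    have hi' : (0:ℝ) ≤ (i:ℝ) := by positivity
    have hle : ((j:ℝ) - 1) ^ d ≥ (i:ℝ) ^ d :=
      Real.rpow_le_rpow hi' hij' (by linarith)
    have h' : (((j:ℝ) - 1) + 1) ^ d - ((j:ℝ) - 1) ^ d ≤ L := by
      have : (((j:ℝ) - 1) + 1) = (j:ℝ) := by ring
      rw [this]; linarith
    have := key_bd d hd L hL ((j:ℝ) - 1) hy h'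
    linarith
  have hsub : S ⊆ ↑(Finset.Icc 1 N ×ˢ Finset.Icc 1 N) := by
    rintro ⟨i, j⟩ ⟨hi, hj, hne, habs⟩
    have habs' := abs_le.mp habs
    have hij : (i : ℝ) ≤ B ∧ (j : ℝ) ≤ B := by
      rcases lt_or_gt_of_ne hne with h | h
      · have hjB := hbd i j hi h (by linarith [habs'.2])
        have : (i:ℝ) < (j:ℝ) := by exact_mod_cast h
        exact ⟨by linarith, hjB⟩
      · have hiB := hbd j i hj h (by linarith [habs'.1])
        have : (j:ℝ) < (i:ℝ) := by exact_mod_cast h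
        exact ⟨hiB, by linarith⟩
    simp only [Finset.coe_product, Set.mem_prod, Finset.mem_coe, Finset.mem_Icc]
    exact ⟨⟨hi, Nat.le_floor hij.1⟩, ⟨hj, Nat.le_floor hij.2⟩⟩
  have hfin : S.Finite := Set.Finite.subset (Finset.finite_toSet _) hsub
  refine ⟨hfin, ?_⟩
  have hcard : S.ncard ≤ N * N := by
    calc S.ncard ≤ (↑(Finset.Icc 1 N ×ˢ Finset.Icc 1 N) : Set (ℕ × ℕ)).ncard :=
          Set.ncard_le_ncard hsub (Finset.finite_toSet _)
      _ = (Finset.Icc 1 N ×ˢ Finset.Icc 1 N).card := Set.ncard_coe_finset _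
      _ = (Finset.Icc 1 N).card * (Finset.Icc 1 N).card := Finset.card_product _ _
      _ ≤ N * N := by simp [Nat.card_Icc]
  have hNB : (N : ℝ) ≤ B := Nat.floor_le hB0
  have hBB : B * B = 4 * L ^ (2 / (d - 1)) := by
    have : (2 : ℝ) / (d - 1) = (d-1)⁻¹ + (d-1)⁻¹ := by ring
    rw [this, Real.rpow_add (by linarith : (0:ℝ) < L)]
    ring
  calc (S.ncard : ℝ) ≤ (N : ℝ) * (N : ℝ) := by exact_mod_cast hcard
    _ ≤ B * B := mul_le_mul hNB hNB (Nat.cast_nonneg N) hB0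
    _ = 4 * L ^ (2 / (d - 1)) := hBB
end

section
/- Fix $n \geq 1$, $d > 1$, and $\tau > n + 2/(d-1)$. Then for every $K \geq 1$, $\sum_{k \in \mathbb{Z}^n, |k| \geq K} \; \sum_{\substack{i \neq j \\ |i^d - j^d| \leq C|k|}} \frac{|i^d - j^d|}{(1 + |k|^\tau)|k|} \leq \frac{C''}{K^{d_4}}$ for some constants $C'' > 0$ and $d_4 > 0$ depending only on $n, d, \tau, C$. -/
set_option maxHeartbeats 1000000

open Finset

section Aux

theorem aux_nat_summable (q : ℝ) (hq : 1 < q) :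
    Summable (fun a : ℕ => ((a:ℝ) + 1) ^ (-q)) := by
  have h1 : Summable (fun a : ℕ => ((a:ℝ)) ^ (-q)) :=
    (Real.summable_nat_rpow (p := -q)).2 (by linarith)
  have h2 := (summable_nat_add_iff (f := fun a : ℕ => ((a:ℝ)) ^ (-q)) 1).2 h1
  apply h2.congr
  intro a; push_cast; ring_nf

theorem aux_int_summable (p : ℝ) (hp : 1 < p) :
    Summable (fun m : ℤ => (1 + |(m:ℝ)|) ^ (-p)) := by
  have hnat : Summable (fun a : ℕ => (1 + (a:ℝ)) ^ (-p)) := by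
    apply (aux_nat_summable p hp).congr
    intro a; ring_nf
  apply Summable.of_nat_of_neg
  · apply hnat.congr; intro a; norm_num
  · apply hnat.congr; intro a; push_cast; norm_num

theorem aux_pi_summable {w : ℤ → ℝ} (hw : Summable w) (h0 : ∀ m, 0 ≤ w m) :
    ∀ N : ℕ, Summable (fun k : Fin N → ℤ => ∏ l, w (k l)) := by
  intro N
  induction N with
  | zero => exact Summable.of_finite
  | succ N ih =>
    have h0' : 0 ≤ w := h0
    have hg' : (0:(Fin N → ℤ) → ℝ) ≤ fun k => ∏ l, w (k l) :=
      fun k => Finset.prod_nonneg fun l _ => h0 _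
    have key := Summable.mul_of_nonneg hw ih h0' hg'
    have he := (Fin.consEquiv (fun _ : Fin (N+1) => ℤ)).summable_iff
      (f := fun k : Fin (N+1) → ℤ => ∏ l, w (k l))
    rw [← he]
    apply key.congr
    intro q
    simp [Fin.consEquiv, Fin.prod_univ_succ]

theorem aux_gap (d : ℝ) (hd : 1 < d) (i j : ℕ) (hi : 1 ≤ i) (hij : i < j) :
    ((j : ℝ) / 2) ^ (d - 1) ≤ (j : ℝ) ^ d - (i : ℝ) ^ d := by
  have hj2 : (2 : ℝ) ≤ (j : ℝ) := by exact_mod_cast (by omega : 2 ≤ j)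
  set b : ℝ := (j : ℝ) with hb
  set t : ℝ := b - 1 with ht
  have ht1 : (1 : ℝ) ≤ t := by simp [ht]; linarith
  have ht0 : (0 : ℝ) < t := by linarith
  have hi_t : (i : ℝ) ≤ t := by
    have h : (i : ℝ) + 1 ≤ (j : ℝ) := by exact_mod_cast (by omega : i + 1 ≤ j)
    rw [ht, hb]; linarith
  have h1 : (i : ℝ) ^ d ≤ t ^ d :=
    Real.rpow_le_rpow (by positivity) hi_t (by linarith)
  have hbern : 1 + d * (1 / t) ≤ (1 + 1 / t) ^ d :=
    one_add_mul_self_le_rpow_one_add (le_trans (by norm_num) (by positivity : (0:ℝ) ≤ 1/t)) hd.le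
  have hbt : b = t * (1 + 1 / t) := by rw [ht, mul_add, mul_one, mul_one_div_cancel (by linarith : b - 1 ≠ 0)]; ring
  have h2 : t ^ d * (1 + d * (1 / t)) ≤ b ^ d := by
    rw [hbt, Real.mul_rpow ht0.le (by positivity)]
    exact mul_le_mul_of_nonneg_left hbern (by positivity)
  have htd : t ^ d = t ^ (d - 1) * t := by
    have h := Real.rpow_add ht0 (d - 1) 1
    rw [Real.rpow_one] at h
    rw [← h]; ring_nf
  have h3 : t ^ (d - 1) ≤ b ^ d - t ^ d := by
    have expand : t ^ d * (1 + d * (1 / t)) = t ^ d + d * t ^ (d-1) := by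
      rw [htd]; field_simp
    nlinarith [Real.rpow_pos_of_pos ht0 (d-1), Real.rpow_pos_of_pos ht0 d]
  have h4 : (b / 2) ^ (d - 1) ≤ t ^ (d - 1) :=
    Real.rpow_le_rpow (by positivity) (by rw [ht]; linarith) (by linarith)
  linarith

theorem aux_pair (d : ℝ) (hd : 1 < d) (τ C s : ℝ) (hC : 0 < C) (hs : 1 ≤ s)
    (q : ℝ) (hq : 1 ≤ q) (i j : ℕ) (hi : 1 ≤ i) (hj : 1 ≤ j) (hij : i ≠ j)
    (habs : |(i:ℝ)^d - (j:ℝ)^d| ≤ C * s) :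
    |(i:ℝ)^d - (j:ℝ)^d| / ((1 + s^τ) * s) ≤
      C * (4^q * C^(q/(d-1)))^2 * s^(2*(q/(d-1)) - τ) *
        (((i:ℝ)+1)^(-q) * (((j:ℝ)+1)^(-q))) := by
  have hs0 : (0:ℝ) < s := by linarith
  have hd1 : (0:ℝ) < d - 1 := by linarith
  set M : ℝ := (C * s) ^ (1/(d-1)) with hM
  have hM0 : 0 < M := Real.rpow_pos_of_pos (by positivity) _
  have hmax : (i:ℝ) ≤ 2*M ∧ (j:ℝ) ≤ 2*M := by
    have key : ∀ a b : ℕ, 1 ≤ a → a < b → |(a:ℝ)^d - (b:ℝ)^d| ≤ C * s → (b:ℝ) ≤ 2*M := by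
      intro a b ha hab hΔ
      have hgap := aux_gap d hd a b ha hab
      have hmono : (a:ℝ)^d ≤ (b:ℝ)^d :=
        Real.rpow_le_rpow (by positivity) (by exact_mod_cast hab.le) (by linarith)
      rw [abs_sub_comm, abs_of_nonneg (by linarith)] at hΔ
      have h2 : ((b:ℝ)/2) ^ (d-1) ≤ C * s := by linarith
      have h3 := Real.rpow_le_rpow (by positivity) h2 (by positivity : (0:ℝ) ≤ 1/(d-1))
      rw [← Real.rpow_mul (by positivity), mul_one_div_cancel hd1.ne', Real.rpow_one] at h3
      rw [hM]; linarith
    rcases lt_or_gt_of_ne hij with h | h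
    · have hjb := key i j hi h habs
      refine ⟨?_, hjb⟩
      have : (i:ℝ) ≤ (j:ℝ) := by exact_mod_cast h.le
      linarith
    · have hib := key j i hj h (by rwa [abs_sub_comm] at habs)
      refine ⟨hib, ?_⟩
      have : (j:ℝ) ≤ (i:ℝ) := by exact_mod_cast h.le
      linarith
  have h1M : (1:ℝ) ≤ 2*M := le_trans (by exact_mod_cast hi) hmax.1
  have hsτ : (0:ℝ) < s^τ := Real.rpow_pos_of_pos hs0 _
  have hstep1 : |(i:ℝ)^d - (j:ℝ)^d| / ((1 + s^τ) * s) ≤ C * s^(-τ) := by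
    have e1 : |(i:ℝ)^d - (j:ℝ)^d| / ((1 + s^τ) * s) ≤ (C*s) / ((1 + s^τ) * s) := by
      gcongr
    have e2 : (C*s) / ((1 + s^τ) * s) ≤ (C*s) / (s^τ * s) :=
      div_le_div_of_nonneg_left (by positivity) (by positivity) (by nlinarith)
    have e3 : (C*s) / (s^τ * s) = C * s^(-τ) := by
      rw [Real.rpow_neg hs0.le]
      field_simp
    linarith
  have hstep2 : ∀ m : ℕ, (m:ℝ) ≤ 2*M → (1:ℝ) ≤ (4*M)^q * ((m:ℝ)+1)^(-q) := by
    intro m hm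
    have hm1 : (0:ℝ) < (m:ℝ)+1 := by positivity
    have h4 : ((m:ℝ)+1)^q ≤ (4*M)^q := Real.rpow_le_rpow (by positivity) (by linarith) (by linarith)
    rw [Real.rpow_neg hm1.le, ← div_eq_mul_inv, le_div_iff₀ (by positivity), one_mul]
    exact h4
  have hI := hstep2 i hmax.1
  have hJ := hstep2 j hmax.2
  have hcomb : |(i:ℝ)^d - (j:ℝ)^d| / ((1 + s^τ) * s) ≤
      (C * s^(-τ)) * (((4*M)^q * ((i:ℝ)+1)^(-q)) * ((4*M)^q * ((j:ℝ)+1)^(-q))) := by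
    calc |(i:ℝ)^d - (j:ℝ)^d| / ((1 + s^τ) * s) ≤ C * s^(-τ) := hstep1
    _ ≤ (C * s^(-τ)) * (((4*M)^q * ((i:ℝ)+1)^(-q)) * ((4*M)^q * ((j:ℝ)+1)^(-q))) := by
        apply le_mul_of_one_le_right (by positivity)
        exact one_le_mul_of_one_le_of_one_le hI hJ
  have hMq : (4*M)^q = (4^q * C^(q/(d-1))) * s^(q/(d-1)) := by
    rw [Real.mul_rpow (by norm_num) hM0.le, hM, ← Real.rpow_mul (by positivity),
      one_div_mul_eq_div, Real.mul_rpow hC.le hs0.le]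
    ring
  have hexp : s^(-τ) * (s^(q/(d-1)) * s^(q/(d-1))) = s^(2*(q/(d-1)) - τ) := by
    rw [← Real.rpow_add hs0, ← Real.rpow_add hs0]
    congr 1; ring
  have heq : (C * s^(-τ)) * (((4*M)^q * ((i:ℝ)+1)^(-q)) * ((4*M)^q * ((j:ℝ)+1)^(-q))) =
      C * (4^q * C^(q/(d-1)))^2 * s^(2*(q/(d-1)) - τ) * (((i:ℝ)+1)^(-q) * (((j:ℝ)+1)^(-q))) := by
    rw [hMq, ← hexp]; ring
  exact hcomb.trans_eq heq

theorem aux_k (n : ℕ) (hn : 1 ≤ n) (δ d₄ p : ℝ) (hδ : 0 < δ) (hd₄ : 0 < d₄)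
    (hp : 0 ≤ p) (hpn : p * n = n + δ)
    (K s : ℝ) (hK : 1 ≤ K) (hKs : K ≤ s) (k : Fin n → ℤ)
    (hs : s = ((∑ l, |k l| : ℤ) : ℝ)) :
    s ^ (-(d₄ + ((n:ℝ)+δ))) ≤
      K^(-d₄) * (2^((n:ℝ)+δ) * ∏ l, ((1:ℝ) + |(k l : ℝ)|) ^ (-p)) := by
  have hs1 : (1:ℝ) ≤ s := hK.trans hKs
  have hs0 : (0:ℝ) < s := by linarith
  have hsplit : s ^ (-(d₄ + ((n:ℝ)+δ))) = s^(-d₄) * s^(-((n:ℝ)+δ)) := by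
    rw [← Real.rpow_add hs0]; congr 1; ring
  have hKd : s^(-d₄) ≤ K^(-d₄) :=
    Real.rpow_le_rpow_of_nonpos (by linarith) hKs (by linarith)
  have hbd : ∀ l, (1:ℝ) + |((k l : ℤ):ℝ)| ≤ 2*s := by
    intro l
    have h1 : |k l| ≤ ∑ m, |k m| := Finset.single_le_sum (fun m _ => abs_nonneg (k m)) (mem_univ l)
    have h2 : (|k l| : ℝ) ≤ s := by rw [hs]; exact_mod_cast h1
    rw [← Int.cast_abs] at *
    linarith
  set P : ℝ := ∏ l, ((1:ℝ) + |((k l : ℤ):ℝ)|) ^ p with hP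
  have hP0 : 0 < P := Finset.prod_pos fun l _ => Real.rpow_pos_of_pos (by positivity) _
  have hprod : P ≤ 2^((n:ℝ)+δ) * s^((n:ℝ)+δ) := by
    have h1 : P ≤ ∏ _l : Fin n, (2*s)^p := by
      apply Finset.prod_le_prod (fun l _ => by positivity)
      intro l _
      exact Real.rpow_le_rpow (by positivity) (hbd l) hp
    have h2 : ∏ _l : Fin n, (2*s)^p = (2*s)^((n:ℝ)+δ) := by
      rw [Finset.prod_const, Finset.card_univ, Fintype.card_fin,
        ← Real.rpow_natCast ((2*s)^p) n, ← Real.rpow_mul (by positivity), hpn]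
    rw [h2] at h1
    rwa [Real.mul_rpow (by norm_num) hs0.le] at h1
  have hinv : ∏ l, ((1:ℝ) + |((k l : ℤ):ℝ)|) ^ (-p) = P⁻¹ := by
    rw [hP, ← Finset.prod_inv_distrib]
    exact Finset.prod_congr rfl fun l _ => Real.rpow_neg (by positivity) p
  have hmain : s^(-((n:ℝ)+δ)) ≤ 2^((n:ℝ)+δ) * P⁻¹ := by
    rw [Real.rpow_neg hs0.le, ← one_div, ← div_eq_mul_inv,
      div_le_div_iff₀ (by positivity) hP0, one_mul]
    linarith
  calc s ^ (-(d₄ + ((n:ℝ)+δ))) = s^(-d₄) * s^(-((n:ℝ)+δ)) := hsplit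
  _ ≤ K^(-d₄) * (2^((n:ℝ)+δ) * P⁻¹) := by
      apply mul_le_mul hKd hmain (by positivity) (by positivity)
  _ = K^(-d₄) * (2^((n:ℝ)+δ) * ∏ l, ((1:ℝ) + |((k l : ℤ):ℝ)|) ^ (-p)) := by rw [hinv]

end Aux

/-- Small-divisor tail sum: for `τ > n + 2/(d-1)` there are `C'' > 0`, `d₄ > 0`
(depending only on `n, d, τ, C`) such that for all `K ≥ 1`,
`∑_{|k| ≥ K} ∑_{i≠j, |i^d-j^d| ≤ C|k|} |i^d-j^d| / ((1+|k|^τ)|k|) ≤ C''/K^{d₄}`. -/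
theorem stmt_8 (n : ℕ) (hn : 1 ≤ n) (d : ℝ) (hd : 1 < d) (τ : ℝ)
    (hτ : τ > n + 2 / (d - 1)) (C : ℝ) (hC : 0 < C) :
    ∃ C'' : ℝ, 0 < C'' ∧ ∃ d₄ : ℝ, 0 < d₄ ∧ ∀ K : ℝ, 1 ≤ K →
      (let f : ((Fin n → ℤ) × (ℕ × ℕ)) → ℝ := fun x =>
        let knorm : ℝ := ((∑ l, |x.1 l| : ℤ) : ℝ)
        if K ≤ knorm ∧ 1 ≤ x.2.1 ∧ 1 ≤ x.2.2 ∧ x.2.1 ≠ x.2.2 ∧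
            |(x.2.1 : ℝ) ^ d - (x.2.2 : ℝ) ^ d| ≤ C * knorm then
          |(x.2.1 : ℝ) ^ d - (x.2.2 : ℝ) ^ d| / ((1 + knorm ^ τ) * knorm)
        else 0;
      Summable f ∧ ∑' x, f x ≤ C'' / K ^ d₄) := by
  have hd1 : (0:ℝ) < d - 1 := by linarith
  set γ : ℝ := τ - n - 2/(d-1) with hγdef
  have hγ : 0 < γ := by rw [hγdef]; linarith
  set q : ℝ := 1 + (d-1)*γ/4 with hqdef
  have hq : 1 < q := by rw [hqdef]; nlinarith
  have hne : d - 1 ≠ 0 := hd1.ne'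
  obtain ⟨δ, hδdef⟩ : ∃ x : ℝ, x = γ/4 := ⟨_, rfl⟩
  have hδ : 0 < δ := by rw [hδdef]; positivity
  obtain ⟨d₄, hd₄def⟩ : ∃ x : ℝ, x = γ/4 := ⟨_, rfl⟩
  have hd₄ : 0 < d₄ := by rw [hd₄def]; positivity
  have hn0 : (0:ℝ) < (n:ℝ) := by exact_mod_cast hn
  set p : ℝ := 1 + δ/n with hpdef
  have hp : 1 < p := by rw [hpdef]; nlinarith [div_pos hδ hn0]
  have hpn : p * n = n + δ := by rw [hpdef]; field_simp
  -- exponent identity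
  have hq' : 2*(q/(d-1)) = 2/(d-1) + γ/2 := by
    rw [hqdef]; field_simp; ring
  have hexp_id : 2*(q/(d-1)) - τ = -(d₄ + ((n:ℝ)+δ)) := by
    rw [hq', hγdef, hd₄def, hδdef]; ring
  -- summable pieces
  set w : ℤ → ℝ := fun m => (1 + |(m:ℝ)|) ^ (-p) with hwdef
  set u : ℕ → ℝ := fun a => ((a:ℝ) + 1) ^ (-q) with hudef
  have hw : Summable w := aux_int_summable p hp
  have hw0 : ∀ m, 0 ≤ w m := fun m => Real.rpow_nonneg (by positivity) _
  have hu : Summable u := aux_nat_summable q hq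
  have hu0 : (0:ℕ → ℝ) ≤ u := fun a => Real.rpow_nonneg (by positivity) _
  have hwpi := aux_pi_summable hw hw0 n
  have hwpi0 : (0:(Fin n → ℤ) → ℝ) ≤ fun k => ∏ l, w (k l) :=
    fun k => Finset.prod_nonneg fun l _ => hw0 _
  have huu := Summable.mul_of_nonneg hu hu hu0 hu0
  have huu0 : (0:ℕ × ℕ → ℝ) ≤ fun ij => u ij.1 * u ij.2 :=
    fun ij => mul_nonneg (hu0 _) (hu0 _)
  have hH := Summable.mul_of_nonneg hwpi huu hwpi0 huu0
  set H : ((Fin n → ℤ) × (ℕ × ℕ)) → ℝ :=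
    fun x => (∏ l, w (x.1 l)) * (u x.2.1 * u x.2.2) with hHdef
  have hHsum : Summable H := hH
  have hH0 : ∀ x, 0 ≤ H x := fun x => mul_nonneg (hwpi0 _) (huu0 _)
  set T : ℝ := ∑' x, H x with hTdef
  have hT0 : 0 ≤ T := tsum_nonneg hH0
  set A : ℝ := C * (4^q * C^(q/(d-1)))^2 with hAdef
  have hA0 : 0 < A := by
    rw [hAdef]
    have h1 : (0:ℝ) < 4^q := Real.rpow_pos_of_pos (by norm_num) _
    have h2 : (0:ℝ) < C^(q/(d-1)) := Real.rpow_pos_of_pos hC _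
    positivity
  set B : ℝ := A * 2^((n:ℝ)+δ) with hBdef
  have hB0 : 0 < B := by
    rw [hBdef]
    have h2 : (0:ℝ) < 2^((n:ℝ)+δ) := Real.rpow_pos_of_pos (by norm_num) _
    positivity
  refine ⟨max 1 (B * T), lt_of_lt_of_le one_pos (le_max_left _ _), d₄, hd₄, ?_⟩
  intro K hK
  intro f
  have hK0 : (0:ℝ) < K := by linarith
  -- pointwise bound
  have hpoint : ∀ x, f x ≤ (B * K^(-d₄)) * H x := by
    intro x
    obtain ⟨k, i, j⟩ := x
    show (if K ≤ ((∑ l, |k l| : ℤ) : ℝ) ∧ 1 ≤ i ∧ 1 ≤ j ∧ i ≠ j ∧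
        |(i : ℝ) ^ d - (j : ℝ) ^ d| ≤ C * ((∑ l, |k l| : ℤ) : ℝ) then
          |(i : ℝ) ^ d - (j : ℝ) ^ d| / ((1 + ((∑ l, |k l| : ℤ) : ℝ) ^ τ) * ((∑ l, |k l| : ℤ) : ℝ))
        else 0) ≤ (B * K^(-d₄)) * H (k, i, j)
    set s : ℝ := ((∑ l, |k l| : ℤ) : ℝ) with hsdef
    by_cases hx : K ≤ s ∧ 1 ≤ i ∧ 1 ≤ j ∧ i ≠ j ∧ |(i : ℝ) ^ d - (j : ℝ) ^ d| ≤ C * s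
    · rw [if_pos hx]
      obtain ⟨hKs, hi, hj, hij, habs⟩ := hx
      have hs1 : (1:ℝ) ≤ s := hK.trans hKs
      have h1 := aux_pair d hd τ C s hC hs1 q hq.le i j hi hj hij habs
      have h2 := aux_k n hn δ d₄ p hδ hd₄ (by linarith) hpn K s hK hKs k hsdef
      calc |(i : ℝ) ^ d - (j : ℝ) ^ d| / ((1 + s ^ τ) * s)
          ≤ A * s^(2*(q/(d-1)) - τ) * (((i:ℝ)+1)^(-q) * (((j:ℝ)+1)^(-q))) := h1
        _ = A * s^(-(d₄ + ((n:ℝ)+δ))) * (((i:ℝ)+1)^(-q) * (((j:ℝ)+1)^(-q))) := by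
            rw [hexp_id]
        _ ≤ A * (K^(-d₄) * (2^((n:ℝ)+δ) * ∏ l, ((1:ℝ) + |(k l : ℝ)|) ^ (-p)))
              * (((i:ℝ)+1)^(-q) * (((j:ℝ)+1)^(-q))) := by
            apply mul_le_mul_of_nonneg_right _ (by positivity)
            exact mul_le_mul_of_nonneg_left h2 hA0.le
        _ = (B * K^(-d₄)) * H (k, i, j) := by
            rw [hBdef, hHdef]
            simp only [hwdef, hudef]
            ring
    · rw [if_neg hx]
      have : 0 ≤ H (k, i, j) := hH0 _
      positivity
  have hf0 : ∀ x, 0 ≤ f x := by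
    intro x
    obtain ⟨k, i, j⟩ := x
    show 0 ≤ (if K ≤ ((∑ l, |k l| : ℤ) : ℝ) ∧ 1 ≤ i ∧ 1 ≤ j ∧ i ≠ j ∧
        |(i : ℝ) ^ d - (j : ℝ) ^ d| ≤ C * ((∑ l, |k l| : ℤ) : ℝ) then
          |(i : ℝ) ^ d - (j : ℝ) ^ d| / ((1 + ((∑ l, |k l| : ℤ) : ℝ) ^ τ) * ((∑ l, |k l| : ℤ) : ℝ))
        else 0)
    set s : ℝ := ((∑ l, |k l| : ℤ) : ℝ) with hsdef
    split_ifs with hx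
    · have hs1 : (1:ℝ) ≤ s := hK.trans hx.1
      have hs0 : (0:ℝ) < s := by linarith
      have hsτ : (0:ℝ) < s^τ := Real.rpow_pos_of_pos hs0 _
      positivity
    · exact le_rfl
  have hg : Summable (fun x => (B * K^(-d₄)) * H x) := hHsum.mul_left _
  have hfsum : Summable f := Summable.of_nonneg_of_le hf0 hpoint hg
  refine ⟨hfsum, ?_⟩
  have hle := Summable.tsum_le_tsum hpoint hfsum hg
  rw [tsum_mul_left, ← hTdef] at hle
  have hKd : K^(-d₄) = (K^d₄)⁻¹ := Real.rpow_neg hK0.le _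
  have hKd0 : 0 < K^d₄ := Real.rpow_pos_of_pos hK0 _
  calc ∑' x, f x ≤ B * K^(-d₄) * T := hle
    _ = (B * T) / K^d₄ := by rw [hKd]; ring
    _ ≤ max 1 (B * T) / K^d₄ := by gcongr; exact le_max_right _ _
end

section
/- Let $\lambda_i, \lambda_j$ be real numbers with $|\lambda_i - \lambda_j| \geq C_\lambda |i^d - j^d|$ for distinct positive integers $i, j$, let $\omega \in [0,1]^n$, $k \in \mathbb{Z}^n$, and suppose the Diophantine condition $|\lambda_i - \lambda_j + \omega \cdot k| \geq \gamma |i^d - j^d|/(1 + |k|^\tau)$ holds. Let $\lambda_i', \lambda_j'$ satisfy $|\lambda_i' - \lambda_i| \leq \varepsilon i^\delta$ and $|\lambda_j' - \lambda_j| \leq \varepsilon j^\delta$ with $0 \leq \delta$, and suppose $|i^d - j^d| \geq i^\delta + j^\delta$. Then for all $k$ with $|k| \leq K$, $|\lambda_i' - \lambda_j' + \omega \cdot k| \geq \frac{\gamma - \varepsilon(1 + K^\tau)}{1 + |k|^\tau} |i^d - j^d|$. -/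
open Finset

/-- Persistence of the Diophantine condition under a perturbation of the eigenvalues of
size `ε i^δ`: the small-divisor estimate holds with `γ` replaced by `γ - ε(1+K^τ)` for
`|k| ≤ K`. -/
theorem stmt_11 (n : ℕ) (d τ δ γ ε Clam K : ℝ) (hd : 1 < d) (hτ : 0 < τ) (hδ : 0 ≤ δ)
    (hγ : 0 < γ) (hε : 0 ≤ ε) (hClam : 0 < Clam) (hK : 0 ≤ K)
    (i j : ℕ) (hi : 1 ≤ i) (hj : 1 ≤ j) (hij : i ≠ j)
    (lami lamj lami' lamj' : ℝ)
    (hgap : |lami - lamj| ≥ Clam * |(i : ℝ) ^ d - (j : ℝ) ^ d|)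
    (ω : Fin n → ℝ) (hω : ∀ l, ω l ∈ Set.Icc (0:ℝ) 1) (k : Fin n → ℤ)
    (hdio : |lami - lamj + ∑ l, ω l * (k l : ℝ)| ≥
      γ * |(i : ℝ) ^ d - (j : ℝ) ^ d| / (1 + ((∑ l, |k l| : ℤ) : ℝ) ^ τ))
    (hi' : |lami' - lami| ≤ ε * (i : ℝ) ^ δ) (hj' : |lamj' - lamj| ≤ ε * (j : ℝ) ^ δ)
    (hpow : |(i : ℝ) ^ d - (j : ℝ) ^ d| ≥ (i : ℝ) ^ δ + (j : ℝ) ^ δ)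
    (hkK : ((∑ l, |k l| : ℤ) : ℝ) ≤ K) :
    |lami' - lamj' + ∑ l, ω l * (k l : ℝ)| ≥
      (γ - ε * (1 + K ^ τ)) / (1 + ((∑ l, |k l| : ℤ) : ℝ) ^ τ) *
        |(i : ℝ) ^ d - (j : ℝ) ^ d| := by
  set s := ∑ l, ω l * (k l : ℝ) with hs
  set D := |(i : ℝ) ^ d - (j : ℝ) ^ d| with hDdef
  set M : ℝ := ((∑ l, |k l| : ℤ) : ℝ) with hMdef
  have hM0 : (0:ℝ) ≤ M := by
    rw [hMdef]
    push_cast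
    exact Finset.sum_nonneg fun l _ => abs_nonneg ((k l : ℝ))
  have hS : (0:ℝ) < 1 + M ^ τ := by positivity
  have hSK : 1 + M ^ τ ≤ 1 + K ^ τ := by
    have := Real.rpow_le_rpow hM0 hkK hτ.le
    linarith
  have hD0 : (0:ℝ) ≤ D := abs_nonneg _
  have habs : |lami - lamj + s| ≤ |lami' - lamj' + s| + |lami' - lami| + |lamj' - lamj| := by
    have h1 : lami - lamj + s = (lami' - lamj' + s) - (lami' - lami) + (lamj' - lamj) := by ring
    rw [h1]
    calc |(lami' - lamj' + s) - (lami' - lami) + (lamj' - lamj)|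
        ≤ |(lami' - lamj' + s) - (lami' - lami)| + |lamj' - lamj| := abs_add_le _ _
      _ ≤ |lami' - lamj' + s| + |lami' - lami| + |lamj' - lamj| := by
          gcongr
          exact abs_sub _ _
  have hεD : ε * ((i : ℝ) ^ δ + (j : ℝ) ^ δ) ≤ ε * D :=
    mul_le_mul_of_nonneg_left hpow hε
  have hfin : (γ - ε * (1 + K ^ τ)) / (1 + M ^ τ) * D ≤ γ * D / (1 + M ^ τ) - ε * D := by
    rw [div_mul_eq_mul_div, div_le_iff₀ hS]
    have h2 : γ * D / (1 + M ^ τ) * (1 + M ^ τ) = γ * D := div_mul_cancel₀ _ hS.ne'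
    have h3 : ε * D * (1 + M ^ τ) ≤ ε * D * (1 + K ^ τ) :=
      mul_le_mul_of_nonneg_left hSK (mul_nonneg hε hD0)
    nlinarith [h2, h3]
  have := hdio
  rw [ge_iff_le]
  calc (γ - ε * (1 + K ^ τ)) / (1 + M ^ τ) * D
      ≤ γ * D / (1 + M ^ τ) - ε * D := hfin
    _ ≤ |lami' - lamj' + s| := by
        have hmul : γ * D / (1 + M ^ τ) ≤ |lami - lamj + s| := hdio
        nlinarith [habs, hεD, hi', hj']
end

section
/- Let $\epsilon \in (0,1)$ and define $\epsilon_l := \epsilon^{(4/3)^l}$ for $l \geq 0$. Then $\sum_{l=0}^\infty \epsilon_l < \infty$, and moreover for any $c > 0$ and $b > 0$ there exists $\epsilon_* > 0$ such that for all $0 < \epsilon < \epsilon_*$ and all $l \geq 0$, $\epsilon_l^2 \exp\big(c \, (4 l^2 / s)^{b}\big) \leq \epsilon_{l+1}$, where $s > 0$ is fixed. -/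
/-- Polynomial growth is dominated by exponential growth. -/
lemma kam_poly_bound (b : ℝ) : ∃ M : ℝ, 0 < M ∧
    ∀ l : ℕ, (l : ℝ) ^ (2 * b) ≤ M * (4 / 3 : ℝ) ^ l := by
  have hlog : 0 < Real.log (4 / 3 : ℝ) := Real.log_pos (by norm_num)
  have htend : Filter.Tendsto
      (fun l : ℕ => ((l : ℝ)) ^ (2 * b) * Real.exp (-(Real.log (4/3)) * l))
      Filter.atTop (nhds 0) :=
    (tendsto_rpow_mul_exp_neg_mul_atTop_nhds_zero (2 * b) _ hlog).comp
      tendsto_natCast_atTop_atTop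
  obtain ⟨M0, hM0⟩ := htend.bddAbove_range
  refine ⟨max M0 1, lt_of_lt_of_le one_pos (le_max_right _ _), fun l => ?_⟩
  have h1 : ((l : ℝ)) ^ (2 * b) * Real.exp (-(Real.log (4/3)) * l) ≤ max M0 1 :=
    le_trans (hM0 (Set.mem_range_self l)) (le_max_left _ _)
  have h2 : Real.exp (Real.log (4/3) * l) = (4 / 3 : ℝ) ^ l := by
    rw [mul_comm, Real.exp_nat_mul, Real.exp_log (by norm_num : (0:ℝ) < 4/3)]
  have h3 : ((l : ℝ)) ^ (2 * b)
      = ((l : ℝ)) ^ (2 * b) * Real.exp (-(Real.log (4/3)) * l)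
        * Real.exp (Real.log (4/3) * l) := by
    rw [mul_assoc, ← Real.exp_add]
    ring_nf
    simp
  rw [h3, ← h2]
  exact mul_le_mul_of_nonneg_right h1 (Real.exp_pos _).le

/-- Superexponential convergence of the KAM iteration: `ε_l := ε^{(4/3)^l}` is summable
for `ε ∈ (0,1)`, and for any `c, b, s > 0` there is `ε_* > 0` such that for `ε < ε_*`
the recursion inequality `ε_l² exp(c (4l²/s)^b) ≤ ε_{l+1}` holds for all `l`. -/
theorem stmt_16 (s c b : ℝ) (hs : 0 < s) (hc : 0 < c) (hb : 0 < b) :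
    (∀ ε : ℝ, 0 < ε → ε < 1 → Summable (fun l : ℕ => ε ^ ((4 / 3 : ℝ) ^ l))) ∧
    ∃ εstar : ℝ, 0 < εstar ∧ ∀ ε : ℝ, 0 < ε → ε < εstar → ∀ l : ℕ,
      (ε ^ ((4 / 3 : ℝ) ^ l)) ^ 2 * Real.exp (c * (4 * (l : ℝ) ^ 2 / s) ^ b) ≤
        ε ^ ((4 / 3 : ℝ) ^ (l + 1)) := by
  constructor
  · -- summability
    intro ε hε hε1
    have hr : (0:ℝ) ≤ ε ^ ((1:ℝ)/3) := Real.rpow_nonneg hε.le _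
    have hr1 : ε ^ ((1:ℝ)/3) < 1 :=
      Real.rpow_lt_one hε.le hε1 (by norm_num)
    refine Summable.of_nonneg_of_le (fun l => Real.rpow_nonneg hε.le _)
      (fun l => ?_) (summable_geometric_of_lt_one hr hr1)
    have key : ((1:ℝ)/3) * l ≤ (4/3:ℝ) ^ l := by
      have := one_add_mul_le_pow (a := (1/3 : ℝ)) (by norm_num) l
      have h34 : ((1:ℝ) + 1/3) = 4/3 := by norm_num
      nlinarith [Nat.cast_nonneg (α := ℝ) l]
    calc ε ^ ((4/3:ℝ) ^ l)
        ≤ ε ^ (((1:ℝ)/3) * l) :=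
          Real.rpow_le_rpow_of_exponent_ge hε hε1.le key
      _ = (ε ^ ((1:ℝ)/3)) ^ l := by
          rw [← Real.rpow_natCast (ε ^ ((1:ℝ)/3)) l, ← Real.rpow_mul hε.le]
  · -- recursion inequality
    obtain ⟨M, hM, hMle⟩ := kam_poly_bound b
    set K : ℝ := c * (4 / s) ^ b * M with hK
    have hKpos : 0 < K := by
      apply mul_pos (mul_pos hc _) hM
      exact Real.rpow_pos_of_pos (by positivity) b
    refine ⟨Real.exp (-(3/2) * K), Real.exp_pos _, fun ε hε hεlt l => ?_⟩
    have hεle : ε ≤ Real.exp (-(3/2) * K) := hεlt.le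
    set t : ℝ := (4/3 : ℝ) ^ l with ht
    have htpos : 0 < t := by positivity
    -- rewrite exponents
    have hE : c * (4 * (l:ℝ)^2 / s) ^ b = c * (4/s) ^ b * (l:ℝ) ^ (2*b) := by
      have h1 : (4 * (l:ℝ)^2 / s) = (4/s) * ((l:ℝ))^2 := by ring
      rw [h1, Real.mul_rpow (by positivity) (by positivity), mul_assoc]
      congr 1
      rw [Real.rpow_mul (Nat.cast_nonneg l), Real.rpow_two]
    have hEle : c * (4 * (l:ℝ)^2 / s) ^ b ≤ K * t := by
      rw [hE, hK]
      calc c * (4/s) ^ b * (l:ℝ) ^ (2*b)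
          ≤ c * (4/s) ^ b * (M * t) := by
            apply mul_le_mul_of_nonneg_left (hMle l)
            positivity
        _ = c * (4/s) ^ b * M * t := by ring
    -- main estimate
    have hsplit : ε ^ ((4/3:ℝ) ^ (l+1)) = ε ^ ((4/3) * t) := by
      rw [ht, pow_succ, mul_comm]
    have h2t : (ε ^ t) ^ 2 = ε ^ ((4/3) * t) * ε ^ ((2/3) * t) := by
      rw [← Real.rpow_natCast (ε ^ t) 2, ← Real.rpow_mul hε.le,
          ← Real.rpow_add hε]
      norm_num
      ring_nf
    rw [hsplit, h2t, mul_assoc]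
    have hle1 : ε ^ ((2/3) * t) * Real.exp (c * (4 * (l:ℝ)^2 / s) ^ b) ≤ 1 := by
      have hεp : ε ^ ((2/3) * t) ≤ Real.exp (-(3/2) * K) ^ ((2/3) * t) :=
        Real.rpow_le_rpow hε.le hεle (by positivity)
      have hexp : Real.exp (-(3/2) * K) ^ ((2/3) * t)
          = Real.exp (-(3/2) * K * ((2/3) * t)) := by
        rw [← Real.exp_mul]
      calc ε ^ ((2/3) * t) * Real.exp (c * (4 * (l:ℝ)^2 / s) ^ b)
          ≤ Real.exp (-(3/2) * K * ((2/3) * t)) * Real.exp (K * t) := by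
            apply mul_le_mul (hexp ▸ hεp) (Real.exp_le_exp.mpr hEle)
              (Real.exp_pos _).le (Real.exp_pos _).le
        _ = Real.exp (-(3/2) * K * ((2/3) * t) + K * t) := (Real.exp_add _ _).symm
        _ = 1 := by rw [show -(3/2) * K * ((2/3) * t) + K * t = 0 by ring, Real.exp_zero]
    calc ε ^ ((4/3) * t) * (ε ^ ((2/3) * t) * Real.exp (c * (4 * (l:ℝ)^2 / s) ^ b))
        ≤ ε ^ ((4/3) * t) * 1 :=
          mul_le_mul_of_nonneg_left hle1 (Real.rpow_nonneg hε.le _)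
      _ = ε ^ ((4/3) * t) := mul_one _
end
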